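/- Let x ∈ E with h(x) = 0 and Dh(x) surjective, and suppose the Riemannian Hessian of f on M at x is positive definite: ⟨v, (∇²f(x) − Σ_{i=1}^m λ_i(x)∇²h_i(x))[v]⟩ > 0 for every nonzero v ∈ ker Dh(x). Then there exists β₀ ≥ 0 such that for every β ≥ β₀, the Hessian ∇²g_β(x) of Fletcher's augmented Lagrangian with penalty β is positive definite on all of E. -/

import Mathlib

open scoped RealInnerProductSpace ContDiff

noncomputable section

variable {E : Type*} [NormedAddCommGroup E] [InnerProductSpace ℝ E] [FiniteDimensional ℝ E] {m : ℕ}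

/-- The least-squares multipliers `λ(x) = (Dh(x) ∘ Dh(x)*)⁻¹ (Dh(x)[∇f(x)]) = (Dh(x)*)† ∇f(x)`.
(When `Dh(x)` is surjective, `Dh(x) ∘ Dh(x)*` is bijective and `Function.invFun` returns
its genuine inverse applied to `Dh(x)[∇f(x)]`.) -/
def lam (f : E → ℝ) (h : E → EuclideanSpace ℝ (Fin m)) (x : E) : EuclideanSpace ℝ (Fin m) :=
  Function.invFun
    (fun y => fderiv ℝ h x (ContinuousLinearMap.adjoint (fderiv ℝ h x) y))
    (fderiv ℝ h x (gradient f x))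

/-- Fletcher's augmented Lagrangian `g(x) = f(x) − ⟪λ(x), h(x)⟫ + β‖h(x)‖²`. -/
def flal (f : E → ℝ) (h : E → EuclideanSpace ℝ (Fin m)) (β : ℝ) (x : E) : ℝ :=
  f x - ⟪lam f h x, h x⟫ + β * ‖h x‖ ^ 2

/-- The smallest singular value `σ_min(A) = min_{‖y‖=1} ‖A*[y]‖` of a linear map. -/
def sigmaMin (A : E →L[ℝ] EuclideanSpace ℝ (Fin m)) : ℝ :=
  sInf ((fun y => ‖ContinuousLinearMap.adjoint A y‖) '' {y : EuclideanSpace ℝ (Fin m) | ‖y‖ = 1})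

/-- `C_λ(x) = ‖Dλ(x)‖`, the operator norm of the derivative of the multipliers. -/
def Clam (f : E → ℝ) (h : E → EuclideanSpace ℝ (Fin m)) (x : E) : ℝ :=
  ‖fderiv ℝ (lam f h) x‖

/-- `β₁(x) = σ₁(Dh(x))·C_λ(x) / (2σ_min(Dh(x))²)`. -/
def beta1 (f : E → ℝ) (h : E → EuclideanSpace ℝ (Fin m)) (x : E) : ℝ :=
  ‖fderiv ℝ h x‖ * Clam f h x / (2 * sigmaMin (fderiv ℝ h x) ^ 2)

/-- `β₂(x) = C_λ(x)/σ_min(Dh(x))`. -/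
def beta2 (f : E → ℝ) (h : E → EuclideanSpace ℝ (Fin m)) (x : E) : ℝ :=
  Clam f h x / sigmaMin (fderiv ℝ h x)

/-- `β₃(x) = 1/σ_min(Dh(x))`. -/
def beta3 (h : E → EuclideanSpace ℝ (Fin m)) (x : E) : ℝ :=
  1 / sigmaMin (fderiv ℝ h x)

lemma contDiff_adjoint : ContDiff ℝ ∞
    (fun T : E →L[ℝ] EuclideanSpace ℝ (Fin m) => ContinuousLinearMap.adjoint T) := by
  let L : (E →L[ℝ] EuclideanSpace ℝ (Fin m)) →ₗ[ℝ] (EuclideanSpace ℝ (Fin m)) →L[ℝ] E :=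
    { toFun := ContinuousLinearMap.adjoint
      map_add' := fun a b => by simp
      map_smul' := fun c a => by simp }
  exact (LinearMap.toContinuousLinearMap L).contDiff

lemma contDiff_gradient (f : E → ℝ) (hf : ContDiff ℝ ∞ f) : ContDiff ℝ ∞ (gradient f) := by
  let L : (E →L[ℝ] ℝ) →ₗ[ℝ] E :=
    { toFun := (InnerProductSpace.toDual ℝ E).symm
      map_add' := fun a b => by simp
      map_smul' := fun c a => by simp }
  have : gradient f = fun y => (LinearMap.toContinuousLinearMap L) (fderiv ℝ f y) := rfl
  rw [this]
  exact (LinearMap.toContinuousLinearMap L).contDiff.comp (hf.fderiv_right (by simp))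


variable {F : Type*} [NormedAddCommGroup F] [NormedSpace ℝ F]


lemma hasDerivAt_line (x v : E) (t : ℝ) : HasDerivAt (fun s : ℝ => x + s • v) v t := by
  simpa using ((hasDerivAt_id t).smul_const v).const_add x

lemma hasDerivAt_comp_line {G : E → F} {x v : E} {t : ℝ}
    (hG : DifferentiableAt ℝ G (x + t • v)) :
    HasDerivAt (fun s : ℝ => G (x + s • v)) (fderiv ℝ G (x + t • v) v) t :=
  hG.hasFDerivAt.comp_hasDerivAt t (hasDerivAt_line x v t)

lemma hasDerivAt_fderiv_line {G : E → F} {x v : E} (hG : ContDiffAt ℝ 2 G x) :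
    HasDerivAt (fun t : ℝ => fderiv ℝ G (x + t • v) v) (fderiv ℝ (fderiv ℝ G) x v v) 0 := by
  have h1 : ContDiffAt ℝ 1 (fderiv ℝ G) x := hG.fderiv_right (by norm_num)
  have h2 : HasFDerivAt (fderiv ℝ G) (fderiv ℝ (fderiv ℝ G) x) x :=
    (h1.differentiableAt (by norm_num)).hasFDerivAt
  have h3 : HasFDerivAt (fderiv ℝ G) (fderiv ℝ (fderiv ℝ G) x) (x + (0:ℝ) • v) := by
    simpa using h2
  have h4 : HasDerivAt (fun t : ℝ => fderiv ℝ G (x + t • v)) (fderiv ℝ (fderiv ℝ G) x v) 0 :=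
    h3.comp_hasDerivAt 0 (hasDerivAt_line x v 0)
  have h5 := (ContinuousLinearMap.apply ℝ F v).hasFDerivAt.comp_hasDerivAt 0 h4
  simpa [Function.comp_def] using h5

lemma fderiv2_line {G : E → F} {x v : E} (hG : ∀ᶠ y in nhds x, ContDiffAt ℝ 2 G y) :
    fderiv ℝ (fderiv ℝ G) x v v = deriv (deriv (fun t : ℝ => G (x + t • v))) 0 := by
  have hc : Continuous (fun t : ℝ => x + t • v) := by continuity
  have hev : ∀ᶠ t in nhds (0:ℝ), ContDiffAt ℝ 2 G (x + t • v) := by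
    have h0 : (fun t : ℝ => x + t • v) 0 = x := by simp
    exact (hc.tendsto 0).eventually (by simpa using hG)
  have h1 : deriv (fun s : ℝ => G (x + s • v)) =ᶠ[nhds (0:ℝ)]
      fun t => fderiv ℝ G (x + t • v) v := by
    filter_upwards [hev] with t ht
    exact (hasDerivAt_comp_line (ht.differentiableAt (by norm_num))).deriv
  rw [h1.deriv_eq]
  exact (hasDerivAt_fderiv_line hG.self_of_nhds).deriv.symm


lemma lam_localization (f : E → ℝ) (h : E → EuclideanSpace ℝ (Fin m))
    (hf : ContDiff ℝ ∞ f) (hh : ContDiff ℝ ∞ h) (x : E)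
    (hsurj : Function.Surjective (fderiv ℝ h x)) :
    ∃ gL : E → EuclideanSpace ℝ (Fin m),
      (∀ᶠ y in nhds x, ContDiffAt ℝ 2 gL y) ∧ lam f h =ᶠ[nhds x] gL := by
  classical
  set A : E → (EuclideanSpace ℝ (Fin m) →L[ℝ] EuclideanSpace ℝ (Fin m)) :=
    fun y => (fderiv ℝ h y).comp (ContinuousLinearMap.adjoint (fderiv ℝ h y)) with hA_def
  have hDh : ContDiff ℝ ∞ (fderiv ℝ h) := hh.fderiv_right (by simp)
  have hadj : ContDiff ℝ ∞ (fun y => ContinuousLinearMap.adjoint (fderiv ℝ h y)) :=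
    contDiff_adjoint.comp hDh
  have hA : ContDiff ℝ ∞ A := hDh.clm_comp hadj
  have hb : ContDiff ℝ ∞ (fun y => fderiv ℝ h y (gradient f y)) :=
    hDh.clm_apply (contDiff_gradient f hf)
  -- A x is a unit
  have hker : ∀ z, A x z = 0 → z = 0 := by
    intro z hz
    have hadj0 : ContinuousLinearMap.adjoint (fderiv ℝ h x) z = 0 := by
      have h1 : ⟪ContinuousLinearMap.adjoint (fderiv ℝ h x) z,
          ContinuousLinearMap.adjoint (fderiv ℝ h x) z⟫ = 0 := by
        rw [ContinuousLinearMap.adjoint_inner_left]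
        have h2 : fderiv ℝ h x (ContinuousLinearMap.adjoint (fderiv ℝ h x) z) = A x z := rfl
        rw [h2, hz, inner_zero_right]
      exact inner_self_eq_zero.mp h1
    obtain ⟨w, hw⟩ := hsurj z
    have h2 : (0:ℝ) = ⟪z, z⟫ := by
      have h3 := ContinuousLinearMap.adjoint_inner_left (fderiv ℝ h x) w z
      rwa [hadj0, inner_zero_left, hw] at h3
    exact inner_self_eq_zero.mp h2.symm
  have hinj : Function.Injective ⇑(A x) := by
    intro a b hab
    have := hker (a - b) (by rw [map_sub, hab, sub_self])
    exact sub_eq_zero.mp this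
  have hsurjA : Function.Surjective ⇑(A x) :=
    by have := (LinearMap.injective_iff_surjective (f := ((A x) : _ →ₗ[ℝ] _))).mp (by exact hinj); exact this
  let eA : EuclideanSpace ℝ (Fin m) ≃ₗ[ℝ] EuclideanSpace ℝ (Fin m) :=
    LinearEquiv.ofBijective ((A x) : _ →ₗ[ℝ] _) ⟨hinj, hsurjA⟩
  have hUnit : IsUnit (A x) := by
    refine ⟨⟨A x, LinearMap.toContinuousLinearMap (eA.symm : _ →ₗ[ℝ] _), ?_, ?_⟩, rfl⟩
    · refine ContinuousLinearMap.ext fun z => ?_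
      show A x (eA.symm z) = z
      exact eA.apply_symm_apply z
    · refine ContinuousLinearMap.ext fun z => ?_
      show eA.symm (A x z) = z
      exact eA.symm_apply_apply z
  set gL : E → EuclideanSpace ℝ (Fin m) :=
    fun y => Ring.inverse (A y) (fderiv ℝ h y (gradient f y)) with hgL_def
  have hUnhd : {y : E | IsUnit (A y)} ∈ nhds x :=
    (Units.isOpen.preimage hA.continuous).mem_nhds hUnit
  refine ⟨gL, ?_, ?_⟩
  · filter_upwards [hUnhd] with y hy
    have h1 : ContDiffAt ℝ 2 (Ring.inverse : (EuclideanSpace ℝ (Fin m) →L[ℝ] _) → _) (A y) := by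
      rw [← hy.unit_spec]
      exact contDiffAt_ringInverse ℝ hy.unit
    exact (h1.comp y (hA.contDiffAt.of_le (by decide))).clm_apply (hb.contDiffAt.of_le (by decide))
  · filter_upwards [hUnhd] with y hy
    obtain ⟨u, hu⟩ := hy
    let uinv : EuclideanSpace ℝ (Fin m) →L[ℝ] EuclideanSpace ℝ (Fin m) := ↑u⁻¹
    have hyinj : Function.Injective ⇑(A y) := by
      intro a b hab
      have h0 : uinv ((A y) a) = uinv ((A y) b) := by rw [hab]
      rw [← hu, ← ContinuousLinearMap.mul_apply, ← ContinuousLinearMap.mul_apply, u.inv_mul,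
        ContinuousLinearMap.one_apply, ContinuousLinearMap.one_apply] at h0
      exact h0
    set b0 := fderiv ℝ h y (gradient f y) with hb0
    have hAinv : (A y) (uinv b0) = b0 := by
      rw [← hu, ← ContinuousLinearMap.mul_apply, u.mul_inv, ContinuousLinearMap.one_apply]
    have h1 : (A y) (Function.invFun ⇑(A y) b0) = b0 := Function.invFun_eq ⟨_, hAinv⟩
    have h2 : (A y) (gL y) = b0 := by
      show (A y) (Ring.inverse (A y) b0) = b0
      rw [← hu, Ring.inverse_unit, ← ContinuousLinearMap.mul_apply, u.mul_inv,
        ContinuousLinearMap.one_apply]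
    exact hyinj (h1.trans h2.symm)


lemma flal_hessian_formula (f : E → ℝ) (h : E → EuclideanSpace ℝ (Fin m))
    (hf : ContDiff ℝ ∞ f) (hh : ContDiff ℝ ∞ h) (x : E) (hfeas : h x = 0)
    (hsurj : Function.Surjective (fderiv ℝ h x)) :
    ∃ T : E →L[ℝ] EuclideanSpace ℝ (Fin m), ∀ β : ℝ, ∀ v : E,
      iteratedFDeriv ℝ 2 (flal f h β) x ![v, v]
        = fderiv ℝ (fderiv ℝ f) x v v - ⟪lam f h x, fderiv ℝ (fderiv ℝ h) x v v⟫
          - 2 * ⟪T v, fderiv ℝ h x v⟫ + 2 * β * ‖fderiv ℝ h x v‖ ^ 2 := by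
  obtain ⟨gL, hgLsmooth, hgLeq⟩ := lam_localization f h hf hh x hsurj
  have hgLx : lam f h x = gL x := hgLeq.eq_of_nhds
  refine ⟨fderiv ℝ gL x, fun β v => ?_⟩
  set G : E → ℝ := fun y => f y - ⟪gL y, h y⟫ + β * ‖h y‖ ^ 2 with hGdef
  have hGev : flal f h β =ᶠ[nhds x] G := by
    filter_upwards [hgLeq] with y hy
    simp only [flal, hGdef, hy]
  have hGat : ∀ᶠ y in nhds x, ContDiffAt ℝ 2 G y := by
    filter_upwards [hgLsmooth] with y hy
    have h1 : ContDiffAt ℝ 2 (fun z => ⟪gL z, h z⟫) y :=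
      hy.inner ℝ (hh.contDiffAt.of_le (by decide))
    have h2 : ContDiffAt ℝ 2 (fun z => ‖h z‖ ^ 2) y :=
      (hh.contDiffAt.of_le (by decide : (2:WithTop ℕ∞) ≤ ∞)).norm_sq ℝ
    exact ((hf.contDiffAt.of_le (by decide)).sub h1).add (contDiffAt_const.mul h2)
  have step1 : iteratedFDeriv ℝ 2 (flal f h β) x ![v, v] = fderiv ℝ (fderiv ℝ G) x v v := by
    rw [iteratedFDeriv_two_apply]
    have hfd : fderiv ℝ (fderiv ℝ (flal f h β)) x = fderiv ℝ (fderiv ℝ G) x :=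
      (hGev.fderiv).fderiv_eq
    rw [hfd]
    simp
  rw [step1, fderiv2_line hGat]
  have hcont : Continuous (fun t : ℝ => x + t • v) := by continuity
  have hevt : ∀ᶠ t in nhds (0:ℝ), ContDiffAt ℝ 2 gL (x + t • v) :=
    (hcont.tendsto 0).eventually (by simpa using hgLsmooth)
  have hΦ : deriv (fun t : ℝ => G (x + t • v)) =ᶠ[nhds (0:ℝ)]
      (fun t => fderiv ℝ f (x + t • v) v
        - (⟪gL (x + t • v), fderiv ℝ h (x + t • v) v⟫
            + ⟪fderiv ℝ gL (x + t • v) v, h (x + t • v)⟫)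
        + β * (⟪h (x + t • v), fderiv ℝ h (x + t • v) v⟫
            + ⟪fderiv ℝ h (x + t • v) v, h (x + t • v)⟫)) := by
    filter_upwards [hevt] with t ht
    have hDf : HasDerivAt (fun s : ℝ => f (x + s • v)) (fderiv ℝ f (x + t • v) v) t :=
      hasDerivAt_comp_line ((hf.differentiable (by decide)) _)
    have hDh' : HasDerivAt (fun s : ℝ => h (x + s • v)) (fderiv ℝ h (x + t • v) v) t :=
      hasDerivAt_comp_line ((hh.differentiable (by decide)) _)
    have hDL : HasDerivAt (fun s : ℝ => gL (x + s • v)) (fderiv ℝ gL (x + t • v) v) t :=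
      hasDerivAt_comp_line (ht.differentiableAt (by norm_num))
    have hI1 := hDL.inner ℝ hDh'
    have hI2 := hDh'.inner ℝ hDh'
    have hN : HasDerivAt (fun s : ℝ => ‖h (x + s • v)‖ ^ 2)
        (⟪h (x + t • v), fderiv ℝ h (x + t • v) v⟫
          + ⟪fderiv ℝ h (x + t • v) v, h (x + t • v)⟫) t := by
      have heq : (fun s : ℝ => ‖h (x + s • v)‖ ^ 2)
          = fun s => ⟪h (x + s • v), h (x + s • v)⟫ := by
        funext s; rw [real_inner_self_eq_norm_sq]
      rw [heq]; exact hI2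
    exact ((hDf.sub hI1).add (hN.const_mul β)).deriv
  rw [hΦ.deriv_eq]
  have h0v : x + (0:ℝ) • v = x := by simp
  have hP' : HasDerivAt (fun t : ℝ => fderiv ℝ f (x + t • v) v) (fderiv ℝ (fderiv ℝ f) x v v) 0 :=
    hasDerivAt_fderiv_line (hf.contDiffAt.of_le (by decide))
  have hH' : HasDerivAt (fun t : ℝ => fderiv ℝ h (x + t • v) v) (fderiv ℝ (fderiv ℝ h) x v v) 0 :=
    hasDerivAt_fderiv_line (hh.contDiffAt.of_le (by decide))
  have hL' : HasDerivAt (fun t : ℝ => fderiv ℝ gL (x + t • v) v)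
      (fderiv ℝ (fderiv ℝ gL) x v v) 0 :=
    hasDerivAt_fderiv_line hgLsmooth.self_of_nhds
  have hL : HasDerivAt (fun t : ℝ => gL (x + t • v)) (fderiv ℝ gL x v) 0 := by
    have hd : DifferentiableAt ℝ gL (x + (0:ℝ) • v) := by
      rw [h0v]; exact hgLsmooth.self_of_nhds.differentiableAt (by norm_num)
    simpa [h0v] using hasDerivAt_comp_line hd
  have hH : HasDerivAt (fun t : ℝ => h (x + t • v)) (fderiv ℝ h x v) 0 := by
    have hd : DifferentiableAt ℝ h (x + (0:ℝ) • v) := (hh.differentiable (by decide)) _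
    simpa [h0v] using hasDerivAt_comp_line hd
  have hfinal := ((hP'.sub ((hL.inner ℝ hH').add (hL'.inner ℝ hH))).add
    (((hH.inner ℝ hH').add (hH'.inner ℝ hH)).const_mul β)).deriv
  refine Eq.trans hfinal ?_
  simp only [h0v, hfeas, inner_zero_right, inner_zero_left, add_zero, zero_add, ← hgLx,
    real_inner_self_eq_norm_sq]
  ring

lemma exists_pos_quadratic_bound (K : Submodule ℝ E) (Q : E → ℝ) (hc : Continuous Q)
    (hs : ∀ (t : ℝ) (u : E), Q (t • u) = t ^ 2 * Q u)
    (hp : ∀ u ∈ K, u ≠ 0 → 0 < Q u) :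
    ∃ μ : ℝ, 0 < μ ∧ ∀ u ∈ K, μ * ‖u‖ ^ 2 ≤ Q u := by
  have hQ0 : Q 0 = 0 := by simpa using hs 0 0
  by_cases hS : ∃ u₀ : E, u₀ ∈ K ∧ ‖u₀‖ = 1
  · have hcpt : IsCompact {u : E | u ∈ K ∧ ‖u‖ = 1} := by
      have h1 : {u : E | u ∈ K ∧ ‖u‖ = 1} = (K : Set E) ∩ Metric.sphere 0 1 := by
        ext u; simp [mem_sphere_zero_iff_norm, SetLike.mem_coe]
      rw [h1]
      exact (isCompact_sphere 0 1).inter_left (Submodule.closed_of_finiteDimensional K)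
    obtain ⟨u₀, hu₀, hmin⟩ := hcpt.exists_isMinOn ⟨hS.choose, hS.choose_spec⟩ hc.continuousOn
    have hu₀ne : u₀ ≠ 0 := by
      intro h0
      rw [h0] at hu₀
      simpa using hu₀.2
    refine ⟨Q u₀, hp u₀ hu₀.1 hu₀ne, ?_⟩
    intro u hu
    rcases eq_or_ne u 0 with rfl | hne
    · simp [hQ0]
    · have hnu : ‖u‖ ≠ 0 := norm_ne_zero_iff.mpr hne
      have humem : (‖u‖⁻¹ • u) ∈ K := K.smul_mem _ hu
      have hunorm : ‖(‖u‖⁻¹ • u)‖ = 1 := by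
        rw [norm_smul, norm_inv, norm_norm]
        field_simp
      have h2 : Q u₀ ≤ Q (‖u‖⁻¹ • u) := hmin ⟨humem, hunorm⟩
      rw [hs _ _] at h2
      have h6 : Q u₀ * ‖u‖ ^ 2 ≤ ‖u‖⁻¹ ^ 2 * Q u * ‖u‖ ^ 2 :=
        mul_le_mul_of_nonneg_right h2 (sq_nonneg _)
      have h7 : ‖u‖⁻¹ ^ 2 * Q u * ‖u‖ ^ 2 = Q u := by field_simp
      linarith
  · refine ⟨1, one_pos, ?_⟩
    intro u hu
    rcases eq_or_ne u 0 with rfl | hne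
    · simp [hQ0]
    · have hnu : ‖u‖ ≠ 0 := norm_ne_zero_iff.mpr hne
      exact absurd ⟨‖u‖⁻¹ • u, K.smul_mem _ hu, by rw [norm_smul, norm_inv, norm_norm]; field_simp⟩ hS

set_option maxHeartbeats 1600000 in
/-- (Fletcher) If `x ∈ M` and the Riemannian Hessian of `f` on `M` at `x` is positive
definite on `ker Dh(x)`, then for every large enough penalty `β`, the Hessian of Fletcher's
augmented Lagrangian at `x` is positive definite on all of `E`. -/
theorem fletcher_hessian_positive_definite_for_large_beta
    (f : E → ℝ) (h : E → EuclideanSpace ℝ (Fin m))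
    (hf : ContDiff ℝ ∞ f) (hh : ContDiff ℝ ∞ h)
    (x : E) (hfeas : h x = 0) (hsurj : Function.Surjective (fderiv ℝ h x))
    (hpos : ∀ v ∈ LinearMap.ker (fderiv ℝ h x : E →ₗ[ℝ] EuclideanSpace ℝ (Fin m)), v ≠ 0 →
      iteratedFDeriv ℝ 2 f x ![v, v]
        - ∑ i, lam f h x i * iteratedFDeriv ℝ 2 (fun y => h y i) x ![v, v] > 0) :
    ∃ β₀ : ℝ, 0 ≤ β₀ ∧ ∀ β : ℝ, β₀ ≤ β →
      ∀ v : E, v ≠ 0 → iteratedFDeriv ℝ 2 (flal f h β) x ![v, v] > 0 := by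

  obtain ⟨T, hT⟩ := flal_hessian_formula f h hf hh x hfeas hsurj
  set K : Submodule ℝ E := LinearMap.ker (fderiv ℝ h x : E →ₗ[ℝ] EuclideanSpace ℝ (Fin m)) with hKdef
  set QB : E → E → ℝ := fun a b =>
    fderiv ℝ (fderiv ℝ f) x a b - ⟪lam f h x, fderiv ℝ (fderiv ℝ h) x a b⟫ with hQBdef
  -- translate the positivity hypothesis
  have hQpos : ∀ u ∈ K, u ≠ 0 → 0 < QB u u := by
    intro u hu hu0
    have h1 := hpos u hu hu0
    have hcomp : ∀ i, iteratedFDeriv ℝ 2 (fun y => h y i) x ![u, u]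
        = fderiv ℝ (fderiv ℝ h) x u u i := by
      intro i
      have hpe : (fun y => h y i)
          = (⇑(EuclideanSpace.proj i : EuclideanSpace ℝ (Fin m) →L[ℝ] ℝ)) ∘ h := rfl
      rw [hpe, ContinuousLinearMap.iteratedFDeriv_comp_left _ hh.contDiffAt (by decide)]
      simp only [ContinuousLinearMap.compContinuousMultilinearMap_coe, Function.comp_apply]
      rw [iteratedFDeriv_two_apply]
      simp
    have hsum : ∑ i, lam f h x i * iteratedFDeriv ℝ 2 (fun y => h y i) x ![u, u]
        = ⟪lam f h x, fderiv ℝ (fderiv ℝ h) x u u⟫ := by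
      rw [PiLp.inner_apply]
      refine Finset.sum_congr rfl fun i _ => ?_
      rw [hcomp i]
      simp [RCLike.inner_apply, starRingEnd_apply, mul_comm]
    rw [iteratedFDeriv_two_apply, hsum] at h1
    simpa [hQBdef] using h1
  -- continuity and homogeneity of the quadratic form
  have hQc : Continuous (fun u => QB u u) := by
    have hA1 : Continuous fun u : E => fderiv ℝ (fderiv ℝ f) x u u :=
      isBoundedBilinearMap_apply.continuous.comp
        ((fderiv ℝ (fderiv ℝ f) x).continuous.prodMk continuous_id)
    have hA2 : Continuous fun u : E => fderiv ℝ (fderiv ℝ h) x u u :=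
      isBoundedBilinearMap_apply.continuous.comp
        ((fderiv ℝ (fderiv ℝ h) x).continuous.prodMk continuous_id)
    simp only [hQBdef]
    exact hA1.sub (continuous_const.inner hA2)
  have hQs : ∀ (t : ℝ) (u : E), QB (t • u) (t • u) = t ^ 2 * QB u u := by
    intro t u
    simp only [hQBdef, map_smul, ContinuousLinearMap.smul_apply, inner_smul_right, smul_eq_mul]
    ring
  obtain ⟨μ, hμ0, hμ⟩ := exists_pos_quadratic_bound K (fun u => QB u u) hQc hQs hQpos
  -- lower bound for ‖Dh w‖² on Kᗮ
  have hDc : Continuous (fun w : E => ‖fderiv ℝ h x w‖ ^ 2) := by fun_prop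
  have hDs : ∀ (t : ℝ) (w : E), ‖fderiv ℝ h x (t • w)‖ ^ 2 = t ^ 2 * ‖fderiv ℝ h x w‖ ^ 2 := by
    intro t w
    rw [map_smul, norm_smul]
    simp [mul_pow, sq_abs]
  have hDp : ∀ w ∈ Kᗮ, w ≠ 0 → 0 < ‖fderiv ℝ h x w‖ ^ 2 := by
    intro w hw hw0
    have hDw : fderiv ℝ h x w ≠ 0 := by
      intro h0
      have hwK : w ∈ K := by rwa [hKdef, LinearMap.mem_ker]
      exact hw0 (Submodule.disjoint_def.mp K.orthogonal_disjoint w hwK hw)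
    exact pow_pos (norm_pos_iff.mpr hDw) 2
  obtain ⟨σ2, hσ20, hσ2⟩ := exists_pos_quadratic_bound Kᗮ _ hDc hDs hDp
  -- the constants
  set C : ℝ := ‖fderiv ℝ (fderiv ℝ f) x‖ + ‖lam f h x‖ * ‖fderiv ℝ (fderiv ℝ h) x‖ with hCdef
  set D : ℝ := ‖T‖ * ‖fderiv ℝ h x‖ with hDdef
  have hC0 : 0 ≤ C := by positivity
  have hD0 : 0 ≤ D := by positivity
  have hQB_bound : ∀ a b : E, |QB a b| ≤ C * ‖a‖ * ‖b‖ := by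
    intro a b
    have h1 : |fderiv ℝ (fderiv ℝ f) x a b| ≤ ‖fderiv ℝ (fderiv ℝ f) x‖ * ‖a‖ * ‖b‖ := by
      rw [← Real.norm_eq_abs]
      calc ‖fderiv ℝ (fderiv ℝ f) x a b‖ ≤ ‖fderiv ℝ (fderiv ℝ f) x a‖ * ‖b‖ :=
            (fderiv ℝ (fderiv ℝ f) x a).le_opNorm b
        _ ≤ ‖fderiv ℝ (fderiv ℝ f) x‖ * ‖a‖ * ‖b‖ :=
            mul_le_mul_of_nonneg_right ((fderiv ℝ (fderiv ℝ f) x).le_opNorm a) (norm_nonneg b)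
    have h2 : |⟪lam f h x, fderiv ℝ (fderiv ℝ h) x a b⟫|
        ≤ ‖lam f h x‖ * ‖fderiv ℝ (fderiv ℝ h) x‖ * ‖a‖ * ‖b‖ := by
      calc |⟪lam f h x, fderiv ℝ (fderiv ℝ h) x a b⟫|
          ≤ ‖lam f h x‖ * ‖fderiv ℝ (fderiv ℝ h) x a b‖ := abs_real_inner_le_norm _ _
        _ ≤ ‖lam f h x‖ * (‖fderiv ℝ (fderiv ℝ h) x‖ * ‖a‖ * ‖b‖) := by
            refine mul_le_mul_of_nonneg_left ?_ (norm_nonneg _)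
            calc ‖fderiv ℝ (fderiv ℝ h) x a b‖ ≤ ‖fderiv ℝ (fderiv ℝ h) x a‖ * ‖b‖ :=
                  (fderiv ℝ (fderiv ℝ h) x a).le_opNorm b
              _ ≤ ‖fderiv ℝ (fderiv ℝ h) x‖ * ‖a‖ * ‖b‖ :=
                  mul_le_mul_of_nonneg_right ((fderiv ℝ (fderiv ℝ h) x).le_opNorm a)
                    (norm_nonneg b)
        _ = ‖lam f h x‖ * ‖fderiv ℝ (fderiv ℝ h) x‖ * ‖a‖ * ‖b‖ := by ring
    calc |QB a b| ≤ |fderiv ℝ (fderiv ℝ f) x a b|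
          + |⟪lam f h x, fderiv ℝ (fderiv ℝ h) x a b⟫| := by
          rw [hQBdef]; exact abs_sub _ _
      _ ≤ C * ‖a‖ * ‖b‖ := by rw [hCdef]; nlinarith [h1, h2]
  -- the penalty threshold
  set Ec : ℝ := (2 * C + 2 * D) ^ 2 / (4 * μ) with hEcdef
  have hEc : 4 * μ * Ec = (2 * C + 2 * D) ^ 2 := by
    rw [hEcdef]; field_simp
  have hEc0 : 0 ≤ Ec := by positivity
  refine ⟨max 0 ((C + 2 * D + Ec + μ) / (2 * σ2)), le_max_left _ _, ?_⟩
  intro β hβ v hv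
  have hβ0 : 0 ≤ β := le_trans (le_max_left _ _) hβ
  have hβσ : C + 2 * D + Ec + μ ≤ 2 * β * σ2 := by
    have h1 : (C + 2 * D + Ec + μ) / (2 * σ2) ≤ β := le_trans (le_max_right _ _) hβ
    rw [div_le_iff₀ (by positivity)] at h1
    linarith
  rw [hT β v, gt_iff_lt]
  -- orthogonal decomposition
  set u : E := (K.orthogonalProjection v : E) with hudef
  set w : E := v - u with hwdef
  have hu : u ∈ K := (K.orthogonalProjection v).2
  have hwmem : w ∈ Kᗮ := Submodule.sub_starProjection_mem_orthogonal (K := K) v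
  have hvum : v = u + w := by rw [hwdef]; abel
  have hDhu : fderiv ℝ h x u = 0 := by
    have := hu
    rwa [hKdef, LinearMap.mem_ker] at this
  have hDhvw : fderiv ℝ h x v = fderiv ℝ h x w := by
    conv_lhs => rw [hvum]
    rw [map_add, hDhu, zero_add]
  have hortho : ⟪u, w⟫ = 0 := (Submodule.mem_orthogonal K w).mp hwmem u hu
  have hnorm2 : ‖v‖ ^ 2 = ‖u‖ ^ 2 + ‖w‖ ^ 2 := by
    conv_lhs => rw [hvum]
    rw [norm_add_sq_real, hortho]; ring
  have hvnorm_le : ‖v‖ ≤ ‖u‖ + ‖w‖ := by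
    conv_lhs => rw [hvum]
    exact norm_add_le u w
  have hab : 0 < ‖u‖ ^ 2 + ‖w‖ ^ 2 := by
    rw [← hnorm2]
    have := norm_pos_iff.mpr hv
    positivity
  -- the three estimates
  have hexp : QB v v = QB u u + QB u w + QB w u + QB w w := by
    conv_lhs => rw [hvum]
    simp only [hQBdef, map_add, ContinuousLinearMap.add_apply, inner_add_right]
    ring
  have e1 : μ * ‖u‖ ^ 2 - C * ‖u‖ * ‖w‖ - C * ‖w‖ * ‖u‖ - C * ‖w‖ * ‖w‖ ≤ QB v v := by
    rw [hexp]
    have b1 := hμ u hu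
    have b2 := neg_abs_le (QB u w)
    have b3 := neg_abs_le (QB w u)
    have b4 := neg_abs_le (QB w w)
    have c2 := hQB_bound u w
    have c3 := hQB_bound w u
    have c4 := hQB_bound w w
    linarith [b1, b2, b3, b4, c2, c3, c4]
  have e2 : ⟪T v, fderiv ℝ h x v⟫ ≤ D * (‖u‖ + ‖w‖) * ‖w‖ := by
    rw [hDhvw]
    have h1 : |⟪T v, fderiv ℝ h x w⟫| ≤ ‖T v‖ * ‖fderiv ℝ h x w‖ := abs_real_inner_le_norm _ _
    have h2 : ‖T v‖ ≤ ‖T‖ * (‖u‖ + ‖w‖) :=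
      le_trans (T.le_opNorm v) (mul_le_mul_of_nonneg_left hvnorm_le (norm_nonneg T))
    have h3 : ‖fderiv ℝ h x w‖ ≤ ‖fderiv ℝ h x‖ * ‖w‖ := (fderiv ℝ h x).le_opNorm w
    have h4 : ‖T v‖ * ‖fderiv ℝ h x w‖ ≤ (‖T‖ * (‖u‖ + ‖w‖)) * (‖fderiv ℝ h x‖ * ‖w‖) :=
      mul_le_mul h2 h3 (norm_nonneg _) (by positivity)
    calc ⟪T v, fderiv ℝ h x w⟫ ≤ |⟪T v, fderiv ℝ h x w⟫| := le_abs_self _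
      _ ≤ (‖T‖ * (‖u‖ + ‖w‖)) * (‖fderiv ℝ h x‖ * ‖w‖) := le_trans h1 h4
      _ = D * (‖u‖ + ‖w‖) * ‖w‖ := by rw [hDdef]; ring
  have e3 : σ2 * ‖w‖ ^ 2 ≤ ‖fderiv ℝ h x v‖ ^ 2 := by
    rw [hDhvw]
    exact hσ2 w hwmem
  have epen : (C + 2 * D + Ec + μ) * ‖w‖ ^ 2 ≤ 2 * β * ‖fderiv ℝ h x v‖ ^ 2 := by
    calc (C + 2 * D + Ec + μ) * ‖w‖ ^ 2 ≤ (2 * β * σ2) * ‖w‖ ^ 2 :=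
          mul_le_mul_of_nonneg_right hβσ (sq_nonneg _)
      _ = 2 * β * (σ2 * ‖w‖ ^ 2) := by ring
      _ ≤ 2 * β * ‖fderiv ℝ h x v‖ ^ 2 := mul_le_mul_of_nonneg_left e3 (by positivity)
  -- the key quadratic positivity
  have key : 0 < μ * ‖u‖ ^ 2 - (2 * C + 2 * D) * ‖u‖ * ‖w‖ + (Ec + μ) * ‖w‖ ^ 2 := by
    rcases eq_or_ne (‖w‖) 0 with hb | hb
    · have ha : 0 < ‖u‖ ^ 2 := by
        rw [hb] at hab; simpa using hab
      rw [hb]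
      nlinarith [mul_pos hμ0 ha]
    · have hb' : 0 < ‖w‖ ^ 2 := by positivity
      nlinarith [sq_nonneg (2 * μ * ‖u‖ - (2 * C + 2 * D) * ‖w‖), hEc,
        mul_pos (mul_pos hμ0 hμ0) hb', hμ0]
  have hbridge : fderiv ℝ (fderiv ℝ f) x v v
      - ⟪lam f h x, fderiv ℝ (fderiv ℝ h) x v v⟫ = QB v v := by rw [hQBdef]
  rw [hbridge]
  linarith [e1, e2, epen, key]
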